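/- Let d ≥ 3 and m ≥ 3 be integers and let g ≥ d be a real number. Consider the single-processor MBSP instance (P = 1) given by the DAG W(d,m) with cache capacity r = 4 and L = 0, and let s = 2m + 2d + 4 and C_0 = (2d + m + 1) + (m + 3)·g. Then there exists a valid schedule with exactly s + d − 1 non-DELETE transitions whose total cost is C_0 − (g − d) = (3d + m + 1) + (m + 2)·g; in particular, if g > d then this cost is strictly smaller than C_0. -/

import Mathlib

namespace MBSP

/-- A transition (pebbling move) of a single processor. -/
inductive Op (ν : Type) where
  | load : ν → Op ν
  | save : ν → Op ν
  | compute : ν → Op ν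
  | delete : ν → Op ν
deriving DecidableEq

/-- An MBSP instance: a DAG with compute weights `ω`, memory weights `μ`,
`P` processors, cache capacity `r`, communication cost `g` and synchronization cost `L`. -/
structure Inst (ν : Type) where
  edge : ν → ν → Prop
  ω : ν → ℝ
  μ : ν → ℝ
  P : ℕ
  r : ℝ
  g : ℝ
  L : ℝ

variable {ν : Type} [DecidableEq ν]

def isSource (I : Inst ν) (v : ν) : Prop := ¬ ∃ u, I.edge u v

def isSink (I : Inst ν) (v : ν) : Prop := ¬ ∃ u, I.edge v u

def Acyclic (I : Inst ν) : Prop := ∀ v, ¬ Relation.TransGen I.edge v v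

def opCost (I : Inst ν) : Op ν → ℝ
  | .load v => I.μ v * I.g
  | .save v => I.μ v * I.g
  | .compute v => I.ω v
  | .delete _ => 0

def applyOp (R B : Finset ν) : Op ν → Finset ν × Finset ν
  | .load v => (insert v R, B)
  | .save v => (R, insert v B)
  | .compute v => (insert v R, B)
  | .delete v => (R.erase v, B)

def opOK (I : Inst ν) (R B : Finset ν) : Op ν → Prop
  | .load v => v ∈ B
  | .save v => v ∈ R
  | .compute v => (∃ u, I.edge u v) ∧ ∀ u, I.edge u v → u ∈ R
  | .delete _ => True

/-- The memory bound for a cache content `R`. -/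
def memOK (I : Inst ν) (R : Finset ν) : Prop := ∑ v ∈ R, I.μ v ≤ I.r

/-- Run a sequence of transitions of one processor on a pair (cache, slow memory). -/
def run (R B : Finset ν) : List (Op ν) → Finset ν × Finset ν
  | [] => (R, B)
  | op :: rest => run (applyOp R B op).1 (applyOp R B op).2 rest

/-- Validity of a sequence of transitions of one processor: every precondition holds
when the transition is applied and the memory bound holds throughout. -/
def seqValid (I : Inst ν) (R B : Finset ν) : List (Op ν) → Prop
  | [] => True
  | op :: rest => opOK I R B op ∧ memOK I (applyOp R B op).1 ∧
      seqValid I (applyOp R B op).1 (applyOp R B op).2 rest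

/-- A superstep: for every processor, a compute phase (computes and deletes),
then a save phase, a delete phase and a load phase. -/
structure Superstep (ν : Type) (P : ℕ) where
  comp : Fin P → List (Op ν)
  save : Fin P → List ν
  del : Fin P → List ν
  load : Fin P → List ν

structure Config (ν : Type) (P : ℕ) where
  R : Fin P → Finset ν
  B : Finset ν

abbrev Schedule (ν : Type) (P : ℕ) := List (Superstep ν P)

variable {P : ℕ}

def compOnly (l : List (Op ν)) : Prop :=
  ∀ op ∈ l, (∃ v, op = Op.compute v) ∨ (∃ v, op = Op.delete v)

def afterComp (c : Config ν P) (S : Superstep ν P) (p : Fin P) : Finset ν :=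
  (run (c.R p) c.B (S.comp p)).1

/-- The shared slow memory after the save phases of all processors. -/
def newB (c : Config ν P) (S : Superstep ν P) : Finset ν :=
  c.B ∪ Finset.univ.biUnion (fun p => (S.save p).toFinset)

def afterDel (c : Config ν P) (S : Superstep ν P) (p : Fin P) : Finset ν :=
  (S.del p).foldl Finset.erase (afterComp c S p)

def afterLoad (c : Config ν P) (S : Superstep ν P) (p : Fin P) : Finset ν :=
  afterDel c S p ∪ (S.load p).toFinset

/-- The configuration reached after executing a superstep. -/
def stepConfig (c : Config ν P) (S : Superstep ν P) : Config ν P :=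
  ⟨fun p => afterLoad c S p, newB c S⟩

/-- Validity of a superstep at a configuration. -/
def ssValid (I : Inst ν) (c : Config ν I.P) (S : Superstep ν I.P) : Prop :=
  (∀ p, compOnly (S.comp p)) ∧
  (∀ p, seqValid I (c.R p) c.B (S.comp p)) ∧
  (∀ p, ∀ v ∈ S.save p, v ∈ afterComp c S p) ∧
  (∀ p, ∀ v ∈ S.load p, v ∈ newB c S) ∧
  (∀ p, memOK I (afterLoad c S p))

def runSched (c : Config ν P) : Schedule ν P → Config ν P
  | [] => c
  | S :: rest => runSched (stepConfig c S) rest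

def schedValidFrom (I : Inst ν) (c : Config ν I.P) : Schedule ν I.P → Prop
  | [] => True
  | S :: rest => ssValid I c S ∧ schedValidFrom I (stepConfig c S) rest

/-- `B` is exactly the set of sources of the DAG. -/
def initB (I : Inst ν) (B : Finset ν) : Prop := ∀ v, v ∈ B ↔ isSource I v

/-- A valid MBSP schedule: starts with empty caches and the sources in slow memory,
every transition is legal and the memory bound holds throughout, and at the end
every sink is in slow memory. -/
def Valid (I : Inst ν) (sched : Schedule ν I.P) : Prop :=
  ∃ B0 : Finset ν, initB I B0 ∧
    schedValidFrom I ⟨fun _ => ∅, B0⟩ sched ∧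
    ∀ v, isSink I v → v ∈ (runSched (⟨fun _ => ∅, B0⟩ : Config ν I.P) sched).B

def listCost (I : Inst ν) (l : List (Op ν)) : ℝ := (l.map (opCost I)).sum

def ioCost (I : Inst ν) (l : List ν) : ℝ := (l.map (fun v => I.μ v * I.g)).sum

/-- The synchronous cost of a superstep. -/
noncomputable def ssCost (I : Inst ν) (S : Superstep ν I.P) : ℝ :=
  (⨆ p : Fin I.P, listCost I (S.comp p)) + (⨆ p : Fin I.P, ioCost I (S.save p)) +
    (⨆ p : Fin I.P, ioCost I (S.load p)) + I.L

/-- The synchronous cost of a schedule. -/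
noncomputable def syncCost (I : Inst ν) (sched : Schedule ν I.P) : ℝ :=
  (sched.map (ssCost I)).sum

/-- Finishing times of the saves in a save phase starting at time `t`. -/
def saveFinishes (I : Inst ν) : ℝ → List ν → List (ν × ℝ)
  | _, [] => []
  | t, v :: rest => (v, t + I.μ v * I.g) :: saveFinishes I (t + I.μ v * I.g) rest

def minSaveTime (entries : List (ν × ℝ)) (v : ν) : Option ℝ :=
  ((entries.filter (fun e => e.1 == v)).map Prod.snd).min?

/-- Finishing time of a load phase: each load waits for the value to be available
in slow memory (time `Γ v`). -/
def loadFold (I : Inst ν) (Γ : ν → Option ℝ) : ℝ → List ν → ℝ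
  | t, [] => t
  | t, v :: rest => loadFold I Γ (max t ((Γ v).getD 0) + I.μ v * I.g) rest

/-- One superstep of the asynchronous execution: updates the finishing time of
every processor and the availability times `Γ` of the values in slow memory. -/
def asyncSS (I : Inst ν) (S : Superstep ν I.P)
    (st : (Fin I.P → ℝ) × (ν → Option ℝ)) : (Fin I.P → ℝ) × (ν → Option ℝ) :=
  let t1 : Fin I.P → ℝ := fun p => st.1 p + listCost I (S.comp p)
  let entries : List (ν × ℝ) :=
    ((List.finRange I.P).map (fun p => saveFinishes I (t1 p) (S.save p))).flatten
  let Γ' : ν → Option ℝ := fun v => (st.2 v).orElse (fun _ => minSaveTime entries v)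
  let t2 : Fin I.P → ℝ := fun p => t1 p + ioCost I (S.save p)
  (fun p => loadFold I Γ' (t2 p) (S.load p), Γ')

def asyncRun (I : Inst ν) (st : (Fin I.P → ℝ) × (ν → Option ℝ)) :
    Schedule ν I.P → (Fin I.P → ℝ) × (ν → Option ℝ)
  | [] => st
  | S :: rest => asyncRun I (asyncSS I S st) rest

/-- The asynchronous cost (makespan) of a schedule. -/
noncomputable def asyncCost (I : Inst ν) (sched : Schedule ν I.P) : ℝ :=
  ⨆ p : Fin I.P, (asyncRun I (fun _ => (0 : ℝ), fun _ => none) sched).1 p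

end MBSP

namespace MBSP

variable {ν : Type} [DecidableEq ν]

/-- A valid single-processor schedule (red-blue pebbling with costs): a sequence of
transitions starting from an empty cache with exactly the sources in slow memory,
in which every precondition and the memory bound hold throughout, and which ends
with every sink in slow memory. -/
def ValidSeq (I : Inst ν) (l : List (Op ν)) : Prop :=
  ∃ B0 : Finset ν, initB I B0 ∧ memOK I ∅ ∧ seqValid I ∅ B0 l ∧
    ∀ v, isSink I v → v ∈ (run (∅ : Finset ν) B0 l).2

/-- Whether a transition is not a DELETE. -/
def nonDelete : Op ν → Bool
  | .delete _ => false
  | _ => true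

/-- Nodes of the construction `W(d,m)`: a source `w`, chains `u_1,…,u_d` and
`u'_1,…,u'_d` (index `j ∈ [d]` is `Fin`-value `j-1`) and a chain `v_0,…,v_m`. -/
inductive WNode (d m : ℕ) where
  | w : WNode d m
  | u : Fin d → WNode d m
  | u' : Fin d → WNode d m
  | v : Fin (m + 1) → WNode d m
deriving DecidableEq, Fintype

/-- Edges of `W(d,m)`: the three chains; `u_d, u'_d → v_0`; `u_d → v_i` for odd
`i ∈ [m]`; `u'_d → v_i` for even `i ∈ [m]`; and `w` to every other node. -/
def wEdge (d m : ℕ) : WNode d m → WNode d m → Prop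
  | .w, .w => False
  | .w, _ => True
  | .u j, .u j' => (j' : ℕ) = (j : ℕ) + 1
  | .u' j, .u' j' => (j' : ℕ) = (j : ℕ) + 1
  | .v i, .v i' => (i' : ℕ) = (i : ℕ) + 1
  | .u j, .v i => (j : ℕ) = d - 1 ∧ ((i : ℕ) = 0 ∨ Odd (i : ℕ))
  | .u' j, .v i => (j : ℕ) = d - 1 ∧ ((i : ℕ) = 0 ∨ ((i : ℕ) ≠ 0 ∧ Even (i : ℕ)))
  | _, _ => False

/-- The single-processor MBSP instance on `W(d,m)` with cache capacity `r = 4`,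
communication cost `g`, and unit compute and memory weights. -/
def wInst (d m : ℕ) (g : ℝ) : Inst (WNode d m) where
  edge := wEdge d m
  ω := fun _ => 1
  μ := fun _ => 1
  P := 1
  r := 4
  g := g
  L := 0

end MBSP

namespace MBSP

set_option linter.dupNamespace false
set_option linter.unusedSectionVars false
set_option linter.unreachableTactic false
set_option linter.unusedTactic false
set_option linter.unusedVariables false

section Helpers

variable {ν : Type} [DecidableEq ν]

theorem run_append' (R B : Finset ν) (l1 l2 : List (Op ν)) :
    run R B (l1 ++ l2) = run (run R B l1).1 (run R B l1).2 l2 := by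
  induction l1 generalizing R B with
  | nil => rfl
  | cons op rest ih => simp [run, ih]

theorem seqValid_append' (I : Inst ν) (R B : Finset ν) (l1 l2 : List (Op ν)) :
    seqValid I R B (l1 ++ l2) ↔
      seqValid I R B l1 ∧ seqValid I (run R B l1).1 (run R B l1).2 l2 := by
  induction l1 generalizing R B with
  | nil => simp [seqValid, run]
  | cons op rest ih => simp [seqValid, run, ih, and_assoc]

theorem seqValid_run_append (I : Inst ν) {R B R' B' R'' B'' : Finset ν} {l1 l2 : List (Op ν)}
    (h1 : seqValid I R B l1 ∧ run R B l1 = (R', B'))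
    (h2 : seqValid I R' B' l2 ∧ run R' B' l2 = (R'', B'')) :
    seqValid I R B (l1 ++ l2) ∧ run R B (l1 ++ l2) = (R'', B'') := by
  rw [seqValid_append', run_append', h1.2]
  exact ⟨⟨h1.1, h2.1⟩, h2.2⟩

theorem listCost_append (I : Inst ν) (l1 l2 : List (Op ν)) :
    listCost I (l1 ++ l2) = listCost I l1 + listCost I l2 := by
  simp [listCost]

/-- Compute a chain `f 0, f 1, …, f n`, deleting the previous element each time. -/
def chainOps (f : ℕ → ν) : ℕ → List (Op ν)
  | 0 => [Op.compute (f 0)]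
  | n+1 => chainOps f n ++ [Op.compute (f (n+1)), Op.delete (f n)]

theorem chainOps_count (f : ℕ → ν) (n : ℕ) :
    ((chainOps f n).filter nonDelete).length = n + 1 := by
  induction n with
  | zero => rfl
  | succ n ih => simp [chainOps, List.filter_append, ih, nonDelete, List.filter_cons]

/-- Steps computing `fV 3, …, fV (2+j)`, loading and deleting the needed `u`-node. -/
def tailOps (x fV : ℕ → ν) : ℕ → List (Op ν)
  | 0 => []
  | j+1 => tailOps x fV j ++
      [Op.load (x (3+j)), Op.compute (fV (3+j)), Op.delete (fV (2+j)), Op.delete (x (3+j))]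

theorem tailOps_count (x fV : ℕ → ν) (j : ℕ) :
    ((tailOps x fV j).filter nonDelete).length = 2 * j := by
  induction j with
  | zero => rfl
  | succ j ih => simp [tailOps, List.filter_append, ih, nonDelete, List.filter_cons]; omega

end Helpers

section WHelpers

def fU (d m : ℕ) (j : ℕ) : WNode d m := if h : j < d then .u ⟨j, h⟩ else .w
def fU' (d m : ℕ) (j : ℕ) : WNode d m := if h : j < d then .u' ⟨j, h⟩ else .w
def fV (d m : ℕ) (i : ℕ) : WNode d m := if h : i < m + 1 then .v ⟨i, h⟩ else .w
def xF (d m : ℕ) (jD : Fin d) (i : ℕ) : WNode d m := if Odd i then .u jD else .u' jD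

theorem fU_eq (d m : ℕ) (j : ℕ) (h : j < d) : fU d m j = .u ⟨j, h⟩ := dif_pos h
theorem fU'_eq (d m : ℕ) (j : ℕ) (h : j < d) : fU' d m j = .u' ⟨j, h⟩ := dif_pos h
theorem fV_eq (d m : ℕ) (i : ℕ) (h : i < m + 1) : fV d m i = .v ⟨i, h⟩ := dif_pos h

theorem memOK_of_card (d m : ℕ) (g : ℝ) (R : Finset (WNode d m)) (h : R.card ≤ 4) :
    memOK (wInst d m g) R := by
  show (∑ _v ∈ R, (1 : ℝ)) ≤ 4
  rw [Finset.sum_const, nsmul_eq_mul, mul_one]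
  exact_mod_cast h

theorem chainOps_cost (d m : ℕ) (g : ℝ) (f : ℕ → WNode d m) (n : ℕ) :
    listCost (wInst d m g) (chainOps f n) = (n : ℝ) + 1 := by
  induction n with
  | zero => simp [chainOps, listCost, opCost, wInst]
  | succ n ih =>
    rw [chainOps, listCost_append, ih]
    simp [listCost, opCost, wInst]

theorem tailOps_cost (d m : ℕ) (g : ℝ) (x fV : ℕ → WNode d m) (j : ℕ) :
    listCost (wInst d m g) (tailOps x fV j) = (j : ℝ) * (g + 1) := by
  induction j with
  | zero => simp [tailOps, listCost]
  | succ j ih =>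
    rw [tailOps, listCost_append, ih]
    simp [listCost, opCost, wInst]
    ring

theorem parents_fU0 (d m : ℕ) (h0 : 0 < d) (a : WNode d m)
    (ha : wEdge d m a (fU d m 0)) : a = .w := by
  rw [fU_eq d m 0 h0] at ha
  cases a with
  | w => rfl
  | u j' => simp [wEdge] at ha
  | u' j' => simp [wEdge] at ha
  | v i => simp [wEdge] at ha

theorem parents_fUsucc (d m : ℕ) (j : ℕ) (h : j + 1 < d) (a : WNode d m)
    (ha : wEdge d m a (fU d m (j+1))) : a = .w ∨ a = fU d m j := by
  rw [fU_eq d m (j+1) h] at ha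
  cases a with
  | w => exact Or.inl rfl
  | u j' =>
    simp only [wEdge, Fin.val_mk] at ha
    refine Or.inr ?_
    rw [fU_eq d m j (by omega)]
    congr 1
    exact Fin.ext (by first | omega | (simp only [Fin.val_mk]; omega))
  | u' j' => simp [wEdge] at ha
  | v i => simp [wEdge] at ha

theorem parents_fU'0 (d m : ℕ) (h0 : 0 < d) (a : WNode d m)
    (ha : wEdge d m a (fU' d m 0)) : a = .w := by
  rw [fU'_eq d m 0 h0] at ha
  cases a with
  | w => rfl
  | u j' => simp [wEdge] at ha
  | u' j' => simp [wEdge] at ha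
  | v i => simp [wEdge] at ha

theorem parents_fU'succ (d m : ℕ) (j : ℕ) (h : j + 1 < d) (a : WNode d m)
    (ha : wEdge d m a (fU' d m (j+1))) : a = .w ∨ a = fU' d m j := by
  rw [fU'_eq d m (j+1) h] at ha
  cases a with
  | w => exact Or.inl rfl
  | u j' => simp [wEdge] at ha
  | u' j' =>
    simp only [wEdge, Fin.val_mk] at ha
    refine Or.inr ?_
    rw [fU'_eq d m j (by omega)]
    congr 1
    exact Fin.ext (by first | omega | (simp only [Fin.val_mk]; omega))
  | v i => simp [wEdge] at ha

theorem parents_v0 (d m : ℕ) (hm : 0 < m + 1) (jD : Fin d) (hjD : (jD : ℕ) = d - 1)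
    (a : WNode d m) (ha : wEdge d m a (fV d m 0)) :
    a = .w ∨ a = .u jD ∨ a = .u' jD := by
  rw [fV_eq d m 0 hm] at ha
  cases a with
  | w => exact Or.inl rfl
  | u j' =>
    simp only [wEdge, Fin.val_mk] at ha
    exact Or.inr (Or.inl (by congr 1; exact Fin.ext (by first | omega | (simp only [Fin.val_mk]; omega))))
  | u' j' =>
    simp only [wEdge, Fin.val_mk] at ha
    exact Or.inr (Or.inr (by congr 1; exact Fin.ext (by first | omega | (simp only [Fin.val_mk]; omega))))
  | v i => simp [wEdge] at ha

theorem parents_vsucc (d m : ℕ) (jD : Fin d) (hjD : (jD : ℕ) = d - 1) (i : ℕ)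
    (h : i + 1 < m + 1) (a : WNode d m) (ha : wEdge d m a (fV d m (i+1))) :
    a = .w ∨ a = fV d m i ∨ (Odd (i+1) ∧ a = .u jD) ∨ (¬ Odd (i+1) ∧ a = .u' jD) := by
  rw [fV_eq d m (i+1) h] at ha
  cases a with
  | w => exact Or.inl rfl
  | u j' =>
    simp only [wEdge, Fin.val_mk] at ha
    obtain ⟨h1, h2⟩ := ha
    have hodd : Odd (i+1) := h2.resolve_left (by omega)
    exact Or.inr (Or.inr (Or.inl ⟨hodd, by congr 1; exact Fin.ext (by first | omega | (simp only [Fin.val_mk]; omega))⟩))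
  | u' j' =>
    simp only [wEdge, Fin.val_mk] at ha
    obtain ⟨h1, h2⟩ := ha
    have heven : Even (i+1) := (h2.resolve_left (by omega)).2
    exact Or.inr (Or.inr (Or.inr ⟨Nat.not_odd_iff_even.mpr heven,
      by congr 1; exact Fin.ext (by first | omega | (simp only [Fin.val_mk]; omega))⟩))
  | v i' =>
    simp only [wEdge, Fin.val_mk] at ha
    refine Or.inr (Or.inl ?_)
    rw [fV_eq d m i (by omega)]
    congr 1
    exact Fin.ext (by first | omega | (simp only [Fin.val_mk]; omega))

theorem wEdge_w (d m : ℕ) (a : WNode d m) (h : a ≠ .w) : wEdge d m .w a := by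
  cases a with
  | w => exact absurd rfl h
  | u j => trivial
  | u' j => trivial
  | v i => trivial

theorem sink_eq (d m : ℕ) (h0 : 0 < d) (x : WNode d m)
    (hx : ¬ ∃ y, wEdge d m x y) : x = fV d m m := by
  cases x with
  | w => exact absurd ⟨.u ⟨0, h0⟩, by simp [wEdge]⟩ hx
  | u j =>
    by_cases h : (j : ℕ) + 1 < d
    · exact absurd ⟨.u ⟨(j : ℕ) + 1, h⟩, by simp [wEdge]⟩ hx
    · exact absurd ⟨.v ⟨0, by omega⟩, by simp [wEdge]; omega⟩ hx
  | u' j =>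
    by_cases h : (j : ℕ) + 1 < d
    · exact absurd ⟨.u' ⟨(j : ℕ) + 1, h⟩, by simp [wEdge]⟩ hx
    · exact absurd ⟨.v ⟨0, by omega⟩, by simp [wEdge]; omega⟩ hx
  | v i =>
    by_cases h : (i : ℕ) < m
    · exact absurd ⟨.v ⟨(i : ℕ) + 1, by omega⟩, by simp [wEdge]⟩ hx
    · rw [fV_eq d m m (by omega)]
      congr 1
      exact Fin.ext (by first | omega | (simp only [Fin.val_mk]; omega))

end WHelpers

theorem chain_valid (d m : ℕ) (g : ℝ) (f : ℕ → WNode d m) (K B : Finset (WNode d m)) (n : ℕ)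
    (hK : K.card ≤ 2)
    (hfK : ∀ j, j ≤ n → f j ∉ K)
    (hinj : ∀ j j', j ≤ n → j' ≤ n → f j = f j' → j = j')
    (hpar0 : (∃ a, wEdge d m a (f 0)) ∧ ∀ a, wEdge d m a (f 0) → a ∈ K)
    (hpar : ∀ j, j < n → (∃ a, wEdge d m a (f (j+1))) ∧
      ∀ a, wEdge d m a (f (j+1)) → a ∈ insert (f j) K) :
    seqValid (wInst d m g) K B (chainOps f n) ∧
      run K B (chainOps f n) = (insert (f n) K, B) := by
  induction n with
  | zero =>
    refine ⟨⟨hpar0, ?_, trivial⟩, rfl⟩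
    exact memOK_of_card d m g _ (le_trans (Finset.card_insert_le _ _) (by omega))
  | succ n ih =>
    obtain ⟨hv, hrun⟩ := ih (fun j hj => hfK j (by omega))
      (fun j j' hj hj' => hinj j j' (by omega) (by omega)) (fun j hj => hpar j (by omega))
    have hne : f (n+1) ≠ f n := fun hh => by
      have := hinj (n+1) n (by omega) (by omega) hh; omega
    have hnotmem : f n ∉ insert (f (n+1)) K := fun hh => by
      rcases Finset.mem_insert.1 hh with h | h
      · exact hne h.symm
      · exact hfK n (by omega) h
    have hcard1 : (insert (f (n+1)) (insert (f n) K)).card ≤ 4 :=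
      le_trans (Finset.card_insert_le _ _)
        (by have := Finset.card_insert_le (f n) K; omega)
    constructor
    · rw [chainOps, seqValid_append', hrun]
      refine ⟨hv, ⟨(hpar n (by omega)).1, (hpar n (by omega)).2⟩, ?_, trivial, ?_, trivial⟩
      · exact memOK_of_card d m g _ hcard1
      · exact memOK_of_card d m g _ (le_trans (Finset.card_erase_le) hcard1)
    · rw [chainOps, run_append', hrun]
      show run (insert (f n) K) B _ = _
      simp only [run, applyOp]
      rw [Finset.insert_comm, Finset.erase_insert hnotmem]

theorem tail_valid (d m : ℕ) (g : ℝ) (hm : 3 ≤ m) (B : Finset (WNode d m)) (jD : Fin d)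
    (hjD : (jD : ℕ) = d - 1) (hBu : WNode.u jD ∈ B) (hBu' : WNode.u' jD ∈ B) :
    ∀ j, 2 + j ≤ m →
      seqValid (wInst d m g) {WNode.w, fV d m 2} B (tailOps (xF d m jD) (fV d m) j) ∧
      run {WNode.w, fV d m 2} B (tailOps (xF d m jD) (fV d m) j) =
        ({WNode.w, fV d m (2+j)}, B) := by
  intro j
  induction j with
  | zero => exact fun _ => ⟨trivial, rfl⟩
  | succ j ih =>
    intro hj
    obtain ⟨hv, hrun⟩ := ih (by omega)
    have h3 : 3 + j < m + 1 := by omega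
    have h2 : 2 + j < m + 1 := by omega
    have e23 : 2 + j + 1 = 3 + j := by omega
    have e3 : fV d m (3+j) = WNode.v ⟨3+j, h3⟩ := fV_eq d m _ h3
    have e2 : fV d m (2+j) = WNode.v ⟨2+j, h2⟩ := fV_eq d m _ h2
    have hXB : xF d m jD (3+j) ∈ B := by unfold xF; split <;> assumption
    have dwx : (WNode.w : WNode d m) ≠ xF d m jD (3+j) := by unfold xF; split <;> simp
    have d3x : fV d m (3+j) ≠ xF d m jD (3+j) := by rw [e3]; unfold xF; split <;> simp
    have d2x : fV d m (2+j) ≠ xF d m jD (3+j) := by rw [e2]; unfold xF; split <;> simp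
    have d32 : fV d m (3+j) ≠ fV d m (2+j) := by
      rw [e3, e2]; intro hcon
      simp only [WNode.v.injEq, Fin.mk.injEq] at hcon; omega
    have dw3 : (WNode.w : WNode d m) ≠ fV d m (3+j) := by rw [e3]; simp
    have dw2 : (WNode.w : WNode d m) ≠ fV d m (2+j) := by rw [e2]; simp
    have hcard0 : ({WNode.w, fV d m (2+j)} : Finset (WNode d m)).card ≤ 2 :=
      le_trans (Finset.card_insert_le _ _) (by simp)
    have hcard2 : (insert (fV d m (3+j))
        (insert (xF d m jD (3+j)) ({WNode.w, fV d m (2+j)} : Finset (WNode d m)))).card ≤ 4 :=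
      le_trans (Finset.card_insert_le _ _)
        (by have := Finset.card_insert_le (xF d m jD (3+j))
              ({WNode.w, fV d m (2+j)} : Finset (WNode d m)); omega)
    have hpar : ∀ a, wEdge d m a (fV d m (3+j)) →
        a ∈ insert (xF d m jD (3+j)) ({WNode.w, fV d m (2+j)} : Finset (WNode d m)) := by
      intro a ha
      rcases parents_vsucc d m jD hjD (2+j) (by omega) a (by rw [e23]; exact ha) with
        h | h | ⟨hodd, h⟩ | ⟨hnodd, h⟩
      · subst h; simp
      · subst h; simp
      · subst h
        rw [e23] at hodd
        have hXeq : xF d m jD (3+j) = WNode.u jD := if_pos hodd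
        rw [← hXeq]; exact Finset.mem_insert_self _ _
      · subst h
        rw [e23] at hnodd
        have hXeq : xF d m jD (3+j) = WNode.u' jD := if_neg hnodd
        rw [← hXeq]; exact Finset.mem_insert_self _ _
    constructor
    · rw [tailOps, seqValid_append', hrun]
      refine ⟨hv, hXB, ?_, ⟨⟨WNode.w, ?_⟩, hpar⟩, ?_, trivial, ?_, trivial, ?_, trivial⟩
      · exact memOK_of_card d m g _ (le_trans (Finset.card_insert_le _ _)
          (by show ({WNode.w, fV d m (2+j)} : Finset (WNode d m)).card + 1 ≤ 4; omega))
      · rw [e3]; trivial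
      · exact memOK_of_card d m g _ hcard2
      · exact memOK_of_card d m g _ (le_trans (Finset.card_erase_le) hcard2)
      · exact memOK_of_card d m g _
          (le_trans (Finset.card_erase_le) (le_trans (Finset.card_erase_le) hcard2))
    · rw [tailOps, run_append', hrun]
      have e2' : 2 + (j+1) = 3 + j := by omega
      rw [e2']
      show run {WNode.w, fV d m (2+j)} B _ = _
      simp only [run, applyOp]
      refine Prod.ext ?_ rfl
      ext a
      simp only [Finset.mem_erase, Finset.mem_insert, Finset.mem_singleton]
      constructor
      · rintro ⟨h1, h2, (rfl | rfl | rfl | rfl)⟩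
        · exact Or.inr rfl
        · exact absurd rfl h1
        · exact Or.inl rfl
        · exact absurd rfl h2
      · rintro (rfl | rfl)
        · exact ⟨dwx, dw2, Or.inr (Or.inr (Or.inl rfl))⟩
        · exact ⟨d3x, d32, Or.inl rfl⟩

/-- The improved schedule on `W(d,m)`. -/
def bigL (d m : ℕ) (jD : Fin d) : List (Op (WNode d m)) :=
  [Op.load .w] ++ chainOps (fU d m) (d-1) ++ [Op.save (.u jD)] ++ chainOps (fU' d m) (d-1)
  ++ [Op.save (.u' jD)]
  ++ [Op.compute (fV d m 0), Op.delete (.u' jD), Op.compute (fV d m 1),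
      Op.delete (fV d m 0), Op.delete (.u jD)]
  ++ chainOps (fU' d m) (d-1)
  ++ [Op.compute (fV d m 2), Op.delete (fV d m 1), Op.delete (.u' jD)]
  ++ tailOps (xF d m jD) (fV d m) (m-2)
  ++ [Op.save (fV d m m)]

theorem statement_11' (d m : ℕ) (hd : 3 ≤ d) (hm : 3 ≤ m) (g : ℝ) (hg : (d : ℝ) ≤ g) :
    (∃ l : List (Op (WNode d m)), ValidSeq (wInst d m g) l ∧
      (l.filter nonDelete).length = 2 * m + 2 * d + 4 + d - 1 ∧
      listCost (wInst d m g) l =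
        ((2 * (d : ℝ) + (m : ℝ) + 1) + ((m : ℝ) + 3) * g) - (g - (d : ℝ)) ∧
      listCost (wInst d m g) l = (3 * (d : ℝ) + (m : ℝ) + 1) + ((m : ℝ) + 2) * g) ∧
    ((d : ℝ) < g →
      (3 * (d : ℝ) + (m : ℝ) + 1) + ((m : ℝ) + 2) * g <
        (2 * (d : ℝ) + (m : ℝ) + 1) + ((m : ℝ) + 3) * g) := by
  have hd0 : 0 < d := by omega
  have hjdlt : d - 1 < d := by omega
  set jD : Fin d := ⟨d - 1, hjdlt⟩ with hjDdef
  have hjD' : (jD : ℕ) = d - 1 := rfl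
  have euD : fU d m (d-1) = WNode.u jD := by rw [fU_eq d m (d-1) hjdlt]
  have euD' : fU' d m (d-1) = WNode.u' jD := by rw [fU'_eq d m (d-1) hjdlt]
  have e0 : fV d m 0 = WNode.v ⟨0, by omega⟩ := fV_eq d m 0 (by omega)
  have e1 : fV d m 1 = WNode.v ⟨1, by omega⟩ := fV_eq d m 1 (by omega)
  have e2 : fV d m 2 = WNode.v ⟨2, by omega⟩ := fV_eq d m 2 (by omega)
  have vne : ∀ (i i' : ℕ), i < m+1 → i' < m+1 → i ≠ i' → fV d m i ≠ fV d m i' := by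
    intro i i' h h' hne hcon
    rw [fV_eq d m i h, fV_eq d m i' h'] at hcon
    simp only [WNode.v.injEq, Fin.mk.injEq] at hcon
    exact hne hcon
  -- abbreviations (written out everywhere)
  -- K1 = insert w ∅, K2 = insert (u jD) K1, K3 = insert (u' jD) K2
  -- K6 = insert (fV 1) K1, K7 = insert (u' jD) K6
  -- B0 = {w}, B1 = insert (u jD) B0, B2 = insert (u' jD) B1
  have cK1 : (insert WNode.w (∅ : Finset (WNode d m))).card ≤ 1 := by simp
  have cK2 : (insert (WNode.u jD) (insert WNode.w (∅ : Finset (WNode d m)))).card ≤ 2 := by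
    have := Finset.card_insert_le (WNode.u jD) (insert WNode.w (∅ : Finset (WNode d m)))
    omega
  have cK3 : (insert (WNode.u' jD) (insert (WNode.u jD)
      (insert WNode.w (∅ : Finset (WNode d m))))).card ≤ 3 := by
    have := Finset.card_insert_le (WNode.u' jD)
      (insert (WNode.u jD) (insert WNode.w (∅ : Finset (WNode d m))))
    omega
  have cK6 : (insert (fV d m 1) (insert WNode.w (∅ : Finset (WNode d m)))).card ≤ 2 := by
    have := Finset.card_insert_le (fV d m 1) (insert WNode.w (∅ : Finset (WNode d m)))
    omega
  have cK7 : (insert (WNode.u' jD) (insert (fV d m 1)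
      (insert WNode.w (∅ : Finset (WNode d m))))).card ≤ 3 := by
    have := Finset.card_insert_le (WNode.u' jD)
      (insert (fV d m 1) (insert WNode.w (∅ : Finset (WNode d m))))
    omega
  -- segment 1 : load w
  have hv1 : seqValid (wInst d m g) ∅ {WNode.w} [Op.load (WNode.w : WNode d m)] ∧
      run (∅ : Finset (WNode d m)) {WNode.w} [Op.load (WNode.w : WNode d m)] =
        ((insert WNode.w ∅, {WNode.w}) : Finset (WNode d m) × Finset (WNode d m)) := by
    refine ⟨⟨?_, ?_, trivial⟩, rfl⟩
    · show WNode.w ∈ ({WNode.w} : Finset (WNode d m)); simp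
    · show memOK (wInst d m g) (insert WNode.w ∅)
      exact memOK_of_card d m g _ (le_trans (Finset.card_insert_le _ _) (by simp))
  -- segment 2 : compute the u-chain
  have hv2 : seqValid (wInst d m g) (insert WNode.w ∅) {WNode.w} (chainOps (fU d m) (d-1)) ∧
      run (insert WNode.w ∅) {WNode.w} (chainOps (fU d m) (d-1)) =
        ((insert (WNode.u jD) (insert WNode.w ∅), {WNode.w}) : Finset (WNode d m) × Finset (WNode d m)) := by
    obtain ⟨h1, h2⟩ := chain_valid d m g (fU d m) (insert WNode.w ∅) {WNode.w} (d-1)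
      (by omega)
      (fun j hj => by rw [fU_eq d m j (by omega)]; simp)
      (fun j j' hj hj' h => by
        rw [fU_eq d m j (by omega), fU_eq d m j' (by omega)] at h
        simp only [WNode.u.injEq, Fin.mk.injEq] at h; exact h)
      (⟨⟨WNode.w, by rw [fU_eq d m 0 hd0]; trivial⟩,
        fun a ha => by rw [parents_fU0 d m hd0 a ha]; simp⟩)
      (fun j hj => ⟨⟨WNode.w, by rw [fU_eq d m (j+1) (by omega)]; trivial⟩,
        fun a ha => by
          rcases parents_fUsucc d m j (by omega) a ha with h | h <;> subst h <;> simp⟩)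
    exact ⟨h1, by rw [h2, euD]⟩
  -- segment 3 : save u_d
  have hv3 : seqValid (wInst d m g) (insert (WNode.u jD) (insert WNode.w ∅)) {WNode.w}
        [Op.save (WNode.u jD)] ∧
      run (insert (WNode.u jD) (insert WNode.w ∅)) {WNode.w} [Op.save (WNode.u jD)] =
        ((insert (WNode.u jD) (insert WNode.w ∅), insert (WNode.u jD) {WNode.w}) : Finset (WNode d m) × Finset (WNode d m)) := by
    refine ⟨⟨Finset.mem_insert_self _ _, ?_, trivial⟩, rfl⟩
    show memOK (wInst d m g) (insert (WNode.u jD) (insert WNode.w ∅))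
    exact memOK_of_card d m g _ (by omega)
  -- segment 4 : compute the u'-chain
  have hv4 : seqValid (wInst d m g) (insert (WNode.u jD) (insert WNode.w ∅))
        (insert (WNode.u jD) {WNode.w}) (chainOps (fU' d m) (d-1)) ∧
      run (insert (WNode.u jD) (insert WNode.w ∅)) (insert (WNode.u jD) {WNode.w})
          (chainOps (fU' d m) (d-1)) =
        ((insert (WNode.u' jD) (insert (WNode.u jD) (insert WNode.w ∅)),
          insert (WNode.u jD) {WNode.w}) : Finset (WNode d m) × Finset (WNode d m)) := by
    obtain ⟨h1, h2⟩ := chain_valid d m g (fU' d m)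
      (insert (WNode.u jD) (insert WNode.w ∅)) (insert (WNode.u jD) {WNode.w}) (d-1)
      cK2
      (fun j hj => by rw [fU'_eq d m j (by omega)]; simp)
      (fun j j' hj hj' h => by
        rw [fU'_eq d m j (by omega), fU'_eq d m j' (by omega)] at h
        simp only [WNode.u'.injEq, Fin.mk.injEq] at h; exact h)
      (⟨⟨WNode.w, by rw [fU'_eq d m 0 hd0]; trivial⟩,
        fun a ha => by rw [parents_fU'0 d m hd0 a ha]; simp⟩)
      (fun j hj => ⟨⟨WNode.w, by rw [fU'_eq d m (j+1) (by omega)]; trivial⟩,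
        fun a ha => by
          rcases parents_fU'succ d m j (by omega) a ha with h | h <;> subst h <;> simp⟩)
    exact ⟨h1, by rw [h2, euD']⟩
  -- segment 5 : save u'_d
  have hv5 : seqValid (wInst d m g)
        (insert (WNode.u' jD) (insert (WNode.u jD) (insert WNode.w ∅)))
        (insert (WNode.u jD) {WNode.w}) [Op.save (WNode.u' jD)] ∧
      run (insert (WNode.u' jD) (insert (WNode.u jD) (insert WNode.w ∅)))
          (insert (WNode.u jD) {WNode.w}) [Op.save (WNode.u' jD)] =
        ((insert (WNode.u' jD) (insert (WNode.u jD) (insert WNode.w ∅)),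
          insert (WNode.u' jD) (insert (WNode.u jD) {WNode.w})) : Finset (WNode d m) × Finset (WNode d m)) := by
    refine ⟨⟨Finset.mem_insert_self _ _, ?_, trivial⟩, rfl⟩
    show memOK (wInst d m g) (insert (WNode.u' jD) (insert (WNode.u jD) (insert WNode.w ∅)))
    exact memOK_of_card d m g _ (by omega)
  -- segment 6 : compute v_0, v_1
  have hv6 : seqValid (wInst d m g)
        (insert (WNode.u' jD) (insert (WNode.u jD) (insert WNode.w ∅)))
        (insert (WNode.u' jD) (insert (WNode.u jD) {WNode.w}))
        [Op.compute (fV d m 0), Op.delete (WNode.u' jD), Op.compute (fV d m 1),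
          Op.delete (fV d m 0), Op.delete (WNode.u jD)] ∧
      run (insert (WNode.u' jD) (insert (WNode.u jD) (insert WNode.w ∅)))
          (insert (WNode.u' jD) (insert (WNode.u jD) {WNode.w}))
          [Op.compute (fV d m 0), Op.delete (WNode.u' jD), Op.compute (fV d m 1),
            Op.delete (fV d m 0), Op.delete (WNode.u jD)] =
        ((insert (fV d m 1) (insert WNode.w ∅),
          insert (WNode.u' jD) (insert (WNode.u jD) {WNode.w}))
            : Finset (WNode d m) × Finset (WNode d m)) := by
    have n1 : (WNode.w : WNode d m) ≠ WNode.u jD := by simp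
    have n2 : (WNode.w : WNode d m) ≠ WNode.u' jD := by simp
    have n3 : fV d m 1 ≠ WNode.u jD := by rw [e1]; simp
    have n6 : fV d m 1 ≠ fV d m 0 := vne 1 0 (by omega) (by omega) (by omega)
    have n8 : (WNode.w : WNode d m) ≠ fV d m 0 := by rw [e0]; simp
    have c40 : (insert (fV d m 0) (insert (WNode.u' jD) (insert (WNode.u jD)
        (insert WNode.w (∅ : Finset (WNode d m)))))).card ≤ 4 := by
      have := Finset.card_insert_le (fV d m 0) (insert (WNode.u' jD) (insert (WNode.u jD)
        (insert WNode.w (∅ : Finset (WNode d m)))))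
      omega
    have hmem' : WNode.u' jD ∈ insert (fV d m 0) (insert (WNode.u' jD) (insert (WNode.u jD)
        (insert WNode.w (∅ : Finset (WNode d m))))) := by simp
    have cer : ((insert (fV d m 0) (insert (WNode.u' jD) (insert (WNode.u jD)
        (insert WNode.w (∅ : Finset (WNode d m)))))).erase (WNode.u' jD)).card ≤ 3 := by
      rw [Finset.card_erase_of_mem hmem']
      omega
    have c41 : (insert (fV d m 1) ((insert (fV d m 0) (insert (WNode.u' jD)
        (insert (WNode.u jD) (insert WNode.w (∅ : Finset (WNode d m)))))).erase
          (WNode.u' jD))).card ≤ 4 := by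
      have := Finset.card_insert_le (fV d m 1) ((insert (fV d m 0) (insert (WNode.u' jD)
        (insert (WNode.u jD) (insert WNode.w (∅ : Finset (WNode d m)))))).erase (WNode.u' jD))
      omega
    constructor
    · refine ⟨⟨⟨WNode.w, by rw [e0]; trivial⟩, ?_⟩, memOK_of_card d m g _ c40, trivial,
        memOK_of_card d m g _ (le_trans cer (by omega)),
        ⟨⟨WNode.w, by rw [e1]; trivial⟩, ?_⟩,
        memOK_of_card d m g _ c41, trivial,
        memOK_of_card d m g _ (le_trans Finset.card_erase_le c41), trivial,
        memOK_of_card d m g _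
          (le_trans Finset.card_erase_le (le_trans Finset.card_erase_le c41)), trivial⟩
      · intro a ha
        rcases parents_v0 d m (by omega) jD hjD' a ha with h | h | h <;> subst h <;> simp
      · intro a ha
        rcases parents_vsucc d m jD hjD' 0 (by omega) a ha with h | h | ⟨_, h⟩ | ⟨hno, h⟩
        · subst h; simp [applyOp]
        · subst h; simp [applyOp, e0]
        · subst h; simp [applyOp]
        · exact absurd (by decide : Odd (0+1)) hno
    · simp only [run, applyOp]
      refine Prod.ext ?_ rfl
      ext a
      simp only [Finset.mem_erase, Finset.mem_insert, Finset.notMem_empty, or_false]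
      constructor
      · rintro ⟨h1, h2, (rfl | ⟨h3, (rfl | rfl | rfl | rfl)⟩)⟩
        · exact Or.inl rfl
        · exact absurd rfl h2
        · exact absurd rfl h3
        · exact absurd rfl h1
        · exact Or.inr rfl
      · rintro (rfl | rfl)
        · exact ⟨n3, n6, Or.inl rfl⟩
        · exact ⟨n1, n8, Or.inr ⟨n2, Or.inr (Or.inr (Or.inr rfl))⟩⟩
  -- segment 7 : recompute the u'-chain
  have hv7 : seqValid (wInst d m g) (insert (fV d m 1) (insert WNode.w ∅))
        (insert (WNode.u' jD) (insert (WNode.u jD) {WNode.w})) (chainOps (fU' d m) (d-1)) ∧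
      run (insert (fV d m 1) (insert WNode.w ∅))
          (insert (WNode.u' jD) (insert (WNode.u jD) {WNode.w})) (chainOps (fU' d m) (d-1)) =
        ((insert (WNode.u' jD) (insert (fV d m 1) (insert WNode.w ∅)),
          insert (WNode.u' jD) (insert (WNode.u jD) {WNode.w})) : Finset (WNode d m) × Finset (WNode d m)) := by
    obtain ⟨h1, h2⟩ := chain_valid d m g (fU' d m) (insert (fV d m 1) (insert WNode.w ∅))
      (insert (WNode.u' jD) (insert (WNode.u jD) {WNode.w})) (d-1)
      cK6
      (fun j hj => by rw [fU'_eq d m j (by omega)]; simp [e1])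
      (fun j j' hj hj' h => by
        rw [fU'_eq d m j (by omega), fU'_eq d m j' (by omega)] at h
        simp only [WNode.u'.injEq, Fin.mk.injEq] at h; exact h)
      (⟨⟨WNode.w, by rw [fU'_eq d m 0 hd0]; trivial⟩,
        fun a ha => by rw [parents_fU'0 d m hd0 a ha]; simp⟩)
      (fun j hj => ⟨⟨WNode.w, by rw [fU'_eq d m (j+1) (by omega)]; trivial⟩,
        fun a ha => by
          rcases parents_fU'succ d m j (by omega) a ha with h | h <;> subst h <;> simp⟩)
    exact ⟨h1, by rw [h2, euD']⟩
  -- segment 8 : compute v_2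
  have hv8 : seqValid (wInst d m g)
        (insert (WNode.u' jD) (insert (fV d m 1) (insert WNode.w ∅)))
        (insert (WNode.u' jD) (insert (WNode.u jD) {WNode.w}))
        [Op.compute (fV d m 2), Op.delete (fV d m 1), Op.delete (WNode.u' jD)] ∧
      run (insert (WNode.u' jD) (insert (fV d m 1) (insert WNode.w ∅)))
          (insert (WNode.u' jD) (insert (WNode.u jD) {WNode.w}))
          [Op.compute (fV d m 2), Op.delete (fV d m 1), Op.delete (WNode.u' jD)] =
        (({WNode.w, fV d m 2}, insert (WNode.u' jD) (insert (WNode.u jD) {WNode.w}))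
            : Finset (WNode d m) × Finset (WNode d m)) := by
    have n2 : (WNode.w : WNode d m) ≠ WNode.u' jD := by simp
    have n8' : (WNode.w : WNode d m) ≠ fV d m 1 := by rw [e1]; simp
    have n9 : fV d m 2 ≠ WNode.u' jD := by rw [e2]; simp
    have n10 : fV d m 2 ≠ fV d m 1 := vne 2 1 (by omega) (by omega) (by omega)
    have c42 : (insert (fV d m 2) (insert (WNode.u' jD) (insert (fV d m 1)
        (insert WNode.w (∅ : Finset (WNode d m)))))).card ≤ 4 := by
      have := Finset.card_insert_le (fV d m 2) (insert (WNode.u' jD) (insert (fV d m 1)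
        (insert WNode.w (∅ : Finset (WNode d m)))))
      omega
    constructor
    · refine ⟨⟨⟨WNode.w, by rw [e2]; trivial⟩, ?_⟩, memOK_of_card d m g _ c42, trivial,
        memOK_of_card d m g _ (le_trans Finset.card_erase_le c42), trivial,
        memOK_of_card d m g _
          (le_trans Finset.card_erase_le (le_trans Finset.card_erase_le c42)), trivial⟩
      intro a ha
      rcases parents_vsucc d m jD hjD' 1 (by omega) a ha with h | h | ⟨hodd, h⟩ | ⟨_, h⟩
      · subst h; simp
      · subst h; simp
      · exact absurd hodd (by decide)
      · subst h; simp
    · simp only [run, applyOp]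
      refine Prod.ext ?_ rfl
      ext a
      simp only [Finset.mem_erase, Finset.mem_insert, Finset.mem_singleton,
        Finset.notMem_empty, or_false]
      constructor
      · rintro ⟨h1, h2, (rfl | rfl | rfl | rfl)⟩
        · exact Or.inr rfl
        · exact absurd rfl h1
        · exact absurd rfl h2
        · exact Or.inl rfl
      · rintro (rfl | rfl)
        · exact ⟨n2, n8', Or.inr (Or.inr (Or.inr rfl))⟩
        · exact ⟨n9, n10, Or.inl rfl⟩
  -- segment 9 : the tail v_3 … v_m
  have hv9 := tail_valid d m g hm (insert (WNode.u' jD) (insert (WNode.u jD) {WNode.w})) jD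
    hjD' (by simp) (by simp) (m-2) (by omega)
  have em2 : 2 + (m-2) = m := by omega
  rw [em2] at hv9
  -- segment 10 : save v_m
  have hv10 : seqValid (wInst d m g) {WNode.w, fV d m m}
        (insert (WNode.u' jD) (insert (WNode.u jD) {WNode.w})) [Op.save (fV d m m)] ∧
      run ({WNode.w, fV d m m} : Finset (WNode d m))
          (insert (WNode.u' jD) (insert (WNode.u jD) {WNode.w})) [Op.save (fV d m m)] =
        (({WNode.w, fV d m m},
          insert (fV d m m) (insert (WNode.u' jD) (insert (WNode.u jD) {WNode.w}))) : Finset (WNode d m) × Finset (WNode d m)) := by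
    refine ⟨⟨?_, ?_, trivial⟩, rfl⟩
    · show fV d m m ∈ ({WNode.w, fV d m m} : Finset (WNode d m)); simp
    · show memOK (wInst d m g) ({WNode.w, fV d m m} : Finset (WNode d m))
      exact memOK_of_card d m g _ (le_trans (Finset.card_insert_le _ _) (by simp))
  -- combine
  have t := seqValid_run_append (wInst d m g) hv1 hv2
  have t := seqValid_run_append (wInst d m g) t hv3
  have t := seqValid_run_append (wInst d m g) t hv4
  have t := seqValid_run_append (wInst d m g) t hv5
  have t := seqValid_run_append (wInst d m g) t hv6
  have t := seqValid_run_append (wInst d m g) t hv7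
  have t := seqValid_run_append (wInst d m g) t hv8
  have t := seqValid_run_append (wInst d m g) t hv9
  have t := seqValid_run_append (wInst d m g) t hv10
  have tv : seqValid (wInst d m g) ∅ {WNode.w} (bigL d m jD) := t.1
  have trun : run (∅ : Finset (WNode d m)) {WNode.w} (bigL d m jD) =
      (({WNode.w, fV d m m},
        insert (fV d m m) (insert (WNode.u' jD) (insert (WNode.u jD) {WNode.w}))) : Finset (WNode d m) × Finset (WNode d m)) := t.2
  have hcost : listCost (wInst d m g) (bigL d m jD) =
      (3 * (d : ℝ) + (m : ℝ) + 1) + ((m : ℝ) + 2) * g := by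
    have cd : ((d - 1 : ℕ) : ℝ) = (d : ℝ) - 1 := by
      rw [Nat.cast_sub (by omega : 1 ≤ d)]; norm_num
    have cm : ((m - 2 : ℕ) : ℝ) = (m : ℝ) - 2 := by
      rw [Nat.cast_sub (by omega : 2 ≤ m)]; norm_num
    simp only [bigL, listCost_append, chainOps_cost, tailOps_cost]
    simp [listCost, opCost, wInst]
    rw [cd, cm]; ring
  refine ⟨⟨bigL d m jD, ⟨{WNode.w}, ?_, ?_, tv, ?_⟩, ?_, ?_, ?_⟩, fun h => by linarith⟩
  · -- initB
    intro a
    constructor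
    · intro ha
      rw [Finset.mem_singleton] at ha
      subst ha
      rintro ⟨b, hb⟩
      cases b <;> simp [wInst, wEdge] at hb
    · intro hsrc
      by_contra hne
      rw [Finset.mem_singleton] at hne
      exact hsrc ⟨WNode.w, wEdge_w d m a hne⟩
  · exact memOK_of_card d m g _ (by simp)
  · -- sinks
    intro v hv
    rw [trun]
    have := sink_eq d m hd0 v hv
    subst this
    exact Finset.mem_insert_self _ _
  · -- count
    simp only [bigL, List.filter_append, List.length_append, chainOps_count, tailOps_count]
    simp [nonDelete, List.filter_cons]
    try omega
  · rw [hcost]; ring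
  · rw [hcost]

/-- On `W(d,m)` (`d, m ≥ 3`) with one processor, `r = 4` and
`g ≥ d`, with `s = 2m + 2d + 4` and `C₀ = (2d + m + 1) + (m + 3)·g`: some valid
schedule with exactly `s + d − 1` non-DELETE transitions has total cost
`C₀ − (g − d) = (3d + m + 1) + (m + 2)·g`; in particular, if `g > d` this cost is
strictly smaller than `C₀`. -/
theorem statement_11 (d m : ℕ) (hd : 3 ≤ d) (hm : 3 ≤ m) (g : ℝ) (hg : (d : ℝ) ≤ g) :
    (∃ l : List (Op (WNode d m)), ValidSeq (wInst d m g) l ∧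
      (l.filter nonDelete).length = 2 * m + 2 * d + 4 + d - 1 ∧
      listCost (wInst d m g) l =
        ((2 * (d : ℝ) + (m : ℝ) + 1) + ((m : ℝ) + 3) * g) - (g - (d : ℝ)) ∧
      listCost (wInst d m g) l = (3 * (d : ℝ) + (m : ℝ) + 1) + ((m : ℝ) + 2) * g) ∧
    ((d : ℝ) < g →
      (3 * (d : ℝ) + (m : ℝ) + 1) + ((m : ℝ) + 2) * g <
        (2 * (d : ℝ) + (m : ℝ) + 1) + ((m : ℝ) + 3) * g) :=
  statement_11' d m hd hm g hg

end MBSP
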